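/- Let H be a Hopf algebra over a commutative ring k with antipode 𝒮, and let π : H → B and i : B → H be Hopf algebra homomorphisms with π ∘ i = id_B. Then the adjoint-type map f : H → H defined by f(h) = Σ i(π(h₁)) 𝒮(h₂) takes values in the coinvariants A = { x ∈ H : Σ x₁ ⊗ π(x₂) = x ⊗ 1_B }, i.e. Σ f(h)₁ ⊗ π(f(h)₂) = f(h) ⊗ 1_B for every h ∈ H. -/

import Mathlib

open TensorProduct

variable {k H B : Type*} [CommRing k] [Ring H] [HopfAlgebra k H]
  [Ring B] [HopfAlgebra k B]

/-- The adjoint-type map `f(h) = Σ i(π(h₁)) 𝒮(h₂)`. -/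
noncomputable def adjMap (π : H →ₐ[k] B) (i : B →ₐ[k] H) : H →ₗ[k] H :=
  LinearMap.mul' k H ∘ₗ
    TensorProduct.map (i.toLinearMap ∘ₗ π.toLinearMap)
      (HopfAlgebra.antipode (R := k) (A := H)) ∘ₗ
    Coalgebra.comul (R := k) (A := H)

namespace ConvAux

variable {k H C D : Type*} [CommRing k] [Ring H] [HopfAlgebra k H]
  [Ring C] [Algebra k C] [Ring D] [Algebra k D]

/-- Convolution product on `Hom(H, C)`. -/
noncomputable def conv (f g : H →ₗ[k] C) : H →ₗ[k] C :=
  LinearMap.mul' k C ∘ₗ TensorProduct.map f g ∘ₗ Coalgebra.comul (R := k) (A := H)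

/-- Convolution unit. -/
noncomputable def cunit : H →ₗ[k] C :=
  Algebra.linearMap k C ∘ₗ Coalgebra.counit (R := k) (A := H)

lemma mul'_assoc :
    LinearMap.mul' k C ∘ₗ TensorProduct.map (LinearMap.mul' k C) LinearMap.id =
      (LinearMap.mul' k C ∘ₗ TensorProduct.map LinearMap.id (LinearMap.mul' k C)) ∘ₗ
        (TensorProduct.assoc k C C C).toLinearMap := by
  apply TensorProduct.ext_threefold
  intro x y z
  simp [mul_assoc]

lemma algHom_comp_mul' (φ : C →ₐ[k] D) :
    φ.toLinearMap ∘ₗ LinearMap.mul' k C =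
      LinearMap.mul' k D ∘ₗ TensorProduct.map φ.toLinearMap φ.toLinearMap := by
  apply TensorProduct.ext'
  intro x y
  simp

lemma algHom_comp_conv (φ : C →ₐ[k] D) (f g : H →ₗ[k] C) :
    φ.toLinearMap ∘ₗ conv f g = conv (φ.toLinearMap ∘ₗ f) (φ.toLinearMap ∘ₗ g) := by
  unfold conv
  rw [← LinearMap.comp_assoc, ← LinearMap.comp_assoc, algHom_comp_mul']
  rw [TensorProduct.map_comp]
  simp only [LinearMap.comp_assoc]

lemma algHom_comp_cunit (φ : C →ₐ[k] D) :
    φ.toLinearMap ∘ₗ (cunit : H →ₗ[k] C) = cunit := by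
  unfold cunit
  ext h
  simp

lemma conv_assoc (f g h : H →ₗ[k] C) :
    conv (conv f g) h = conv f (conv g h) := by
  unfold conv
  have h1 : TensorProduct.map
        (LinearMap.mul' k C ∘ₗ TensorProduct.map f g ∘ₗ Coalgebra.comul (R := k) (A := H)) h =
      TensorProduct.map (LinearMap.mul' k C) LinearMap.id ∘ₗ
        TensorProduct.map (TensorProduct.map f g) h ∘ₗ
        TensorProduct.map (Coalgebra.comul (R := k) (A := H)) LinearMap.id := by
    rw [← TensorProduct.map_comp, ← TensorProduct.map_comp]
    simp
  have h2 : TensorProduct.map f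
        (LinearMap.mul' k C ∘ₗ TensorProduct.map g h ∘ₗ Coalgebra.comul (R := k) (A := H)) =
      TensorProduct.map LinearMap.id (LinearMap.mul' k C) ∘ₗ
        TensorProduct.map f (TensorProduct.map g h) ∘ₗ
        TensorProduct.map LinearMap.id (Coalgebra.comul (R := k) (A := H)) := by
    rw [← TensorProduct.map_comp, ← TensorProduct.map_comp]
    simp
  rw [h1, h2]
  have hco : TensorProduct.map (Coalgebra.comul (R := k) (A := H)) LinearMap.id ∘ₗ
        Coalgebra.comul (R := k) (A := H) =
      (TensorProduct.assoc k H H H).symm.toLinearMap ∘ₗ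
        TensorProduct.map LinearMap.id (Coalgebra.comul (R := k) (A := H)) ∘ₗ
        Coalgebra.comul (R := k) (A := H) := by
    have := Coalgebra.coassoc_symm (R := k) (A := H)
    ext a
    exact (Coalgebra.coassoc_symm_apply a).symm
  calc LinearMap.mul' k C ∘ₗ
      (TensorProduct.map (LinearMap.mul' k C) LinearMap.id ∘ₗ
        TensorProduct.map (TensorProduct.map f g) h ∘ₗ
        TensorProduct.map (Coalgebra.comul (R := k) (A := H)) LinearMap.id) ∘ₗ
      Coalgebra.comul (R := k) (A := H)
      = (LinearMap.mul' k C ∘ₗ TensorProduct.map (LinearMap.mul' k C) LinearMap.id) ∘ₗ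
        (TensorProduct.map (TensorProduct.map f g) h ∘ₗ
          (TensorProduct.assoc k H H H).symm.toLinearMap) ∘ₗ
        TensorProduct.map LinearMap.id (Coalgebra.comul (R := k) (A := H)) ∘ₗ
        Coalgebra.comul (R := k) (A := H) := by
        simp only [LinearMap.comp_assoc, hco]
    _ = (LinearMap.mul' k C ∘ₗ TensorProduct.map LinearMap.id (LinearMap.mul' k C)) ∘ₗ
        ((TensorProduct.assoc k C C C).toLinearMap ∘ₗ
          (TensorProduct.assoc k C C C).symm.toLinearMap) ∘ₗ
        TensorProduct.map f (TensorProduct.map g h) ∘ₗ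
        TensorProduct.map LinearMap.id (Coalgebra.comul (R := k) (A := H)) ∘ₗ
        Coalgebra.comul (R := k) (A := H) := by
        rw [mul'_assoc, TensorProduct.map_map_comp_assoc_symm_eq]
        simp only [LinearMap.comp_assoc]
    _ = LinearMap.mul' k C ∘ₗ
        (TensorProduct.map LinearMap.id (LinearMap.mul' k C) ∘ₗ
          TensorProduct.map f (TensorProduct.map g h) ∘ₗ
          TensorProduct.map LinearMap.id (Coalgebra.comul (R := k) (A := H))) ∘ₗ
        Coalgebra.comul (R := k) (A := H) := by
        have hcancel : (TensorProduct.assoc k C C C).toLinearMap ∘ₗ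
            (TensorProduct.assoc k C C C).symm.toLinearMap = LinearMap.id := by
          ext x; simp
        simp only [hcancel, LinearMap.id_comp, LinearMap.comp_assoc]
open Coalgebra

lemma conv_cunit (f : H →ₗ[k] C) : conv f cunit = f := by
  ext h
  have hrep := Coalgebra.sum_map_tmul_counit_eq (R := k) f h (repr := ℛ k h)
  apply_fun (TensorProduct.rid k C) at hrep
  simp only [map_sum, TensorProduct.rid_tmul, one_smul] at hrep
  show LinearMap.mul' k C (TensorProduct.map f cunit (Coalgebra.comul h)) = f h
  rw [← (ℛ k h).eq, map_sum, map_sum]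
  simp only [TensorProduct.map_tmul, LinearMap.mul'_apply]
  rw [← hrep]
  refine Finset.sum_congr rfl fun j _ => ?_
  show f _ * algebraMap k C (counit _) = _
  rw [← Algebra.commutes, ← Algebra.smul_def]

lemma cunit_conv (f : H →ₗ[k] C) : conv cunit f = f := by
  ext h
  have hrep := Coalgebra.sum_counit_tmul_map_eq (R := k) f h (repr := ℛ k h)
  apply_fun (TensorProduct.lid k C) at hrep
  simp only [map_sum, TensorProduct.lid_tmul, one_smul] at hrep
  show LinearMap.mul' k C (TensorProduct.map cunit f (Coalgebra.comul h)) = f h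
  rw [← (ℛ k h).eq, map_sum, map_sum]
  simp only [TensorProduct.map_tmul, LinearMap.mul'_apply]
  rw [← hrep]
  refine Finset.sum_congr rfl fun j _ => ?_
  show algebraMap k C (counit _) * f _ = _
  rw [← Algebra.smul_def]

lemma conv_id_antipode :
    conv LinearMap.id (HopfAlgebra.antipode (R := k) (A := H)) = (cunit : H →ₗ[k] H) :=
  HopfAlgebra.mul_antipode_lTensor_comul

lemma conv_antipode_id :
    conv (HopfAlgebra.antipode (R := k) (A := H)) LinearMap.id = (cunit : H →ₗ[k] H) :=
  HopfAlgebra.mul_antipode_rTensor_comul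

end ConvAux

open ConvAux

/-- the map `f(h) = Σ i(π(h₁)) 𝒮(h₂)` takes values in the coinvariants
`{x : Σ x₁ ⊗ π(x₂) = x ⊗ 1}`. -/
theorem adjMap_mem_coinvariants (π : H →ₐ[k] B) (i : B →ₐ[k] H)
    (hπΔ : TensorProduct.map π.toLinearMap π.toLinearMap ∘ₗ
        Coalgebra.comul (R := k) (A := H) =
      Coalgebra.comul (R := k) (A := B) ∘ₗ π.toLinearMap)
    (hπε : Coalgebra.counit (R := k) (A := B) ∘ₗ π.toLinearMap =
      Coalgebra.counit (R := k) (A := H))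
    (hiΔ : TensorProduct.map i.toLinearMap i.toLinearMap ∘ₗ
        Coalgebra.comul (R := k) (A := B) =
      Coalgebra.comul (R := k) (A := H) ∘ₗ i.toLinearMap)
    (hiε : Coalgebra.counit (R := k) (A := H) ∘ₗ i.toLinearMap =
      Coalgebra.counit (R := k) (A := B))
    (hπi : ∀ b : B, π (i b) = b) :
    ∀ h : H,
      TensorProduct.map (LinearMap.id : H →ₗ[k] H) π.toLinearMap
          (Coalgebra.comul (R := k) (adjMap π i h)) = adjMap π i h ⊗ₜ[k] (1 : B) := by
  set S : H →ₗ[k] H := HopfAlgebra.antipode (R := k) (A := H) with hS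
  set π' : H →ₗ[k] B := π.toLinearMap
  set i' : B →ₗ[k] H := i.toLinearMap
  -- the algebra hom α = (id ⊗ π) ∘ Δ
  set αA : H →ₐ[k] H ⊗[k] B :=
    (Algebra.TensorProduct.map (AlgHom.id k H) π).comp (Bialgebra.comulAlgHom k H) with hαA
  set ιA : H →ₐ[k] H ⊗[k] B := Algebra.TensorProduct.includeLeft with hιA
  set ρB : B →ₗ[k] H ⊗[k] B := Algebra.TensorProduct.includeRight.toLinearMap with hρB
  have hα : αA.toLinearMap =
      TensorProduct.map LinearMap.id π' ∘ₗ Coalgebra.comul (R := k) (A := H) := by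
    have : (Algebra.TensorProduct.map (AlgHom.id k H) π).toLinearMap =
        TensorProduct.map LinearMap.id π' := by
      apply TensorProduct.ext'
      intro x y
      rfl
    rw [hαA, AlgHom.comp_toLinearMap, this]
    rfl
  have hF : adjMap π i = conv (i' ∘ₗ π') S := rfl
  -- the three convolution factors on the "β" side
  have hπi' : π' ∘ₗ i' = LinearMap.id := by ext b; exact hπi b
  -- mul' ∘ (ι ⊗ ρB) = id
  have hmulιρ : LinearMap.mul' k (H ⊗[k] B) ∘ₗ TensorProduct.map ιA.toLinearMap ρB =
      LinearMap.id := by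
    apply TensorProduct.ext'
    intro x b
    simp [hιA, hρB, Algebra.TensorProduct.tmul_mul_tmul]
  -- α = conv ι (ρB ∘ π')
  have hαιρ : αA.toLinearMap = conv ιA.toLinearMap (ρB ∘ₗ π') := by
    rw [hα]
    unfold conv
    rw [show TensorProduct.map ιA.toLinearMap (ρB ∘ₗ π') =
        (TensorProduct.map ιA.toLinearMap ρB) ∘ₗ TensorProduct.map LinearMap.id π' by
      rw [← TensorProduct.map_comp]; simp]
    rw [← LinearMap.comp_assoc, ← LinearMap.comp_assoc, hmulιρ]
    simp [LinearMap.comp_assoc]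
  -- conv α (α ∘ S) = cunit
  have hαS : conv αA.toLinearMap (αA.toLinearMap ∘ₗ S) = cunit := by
    have h1 := algHom_comp_conv αA LinearMap.id S
    rw [conv_id_antipode, algHom_comp_cunit, LinearMap.comp_id] at h1
    exact h1.symm
  -- conv (ι ∘ S) ι = cunit
  have hδι : conv (ιA.toLinearMap ∘ₗ S) ιA.toLinearMap = cunit := by
    have h1 := algHom_comp_conv ιA S LinearMap.id
    rw [conv_antipode_id, algHom_comp_cunit, LinearMap.comp_id] at h1
    exact h1.symm
  -- conv (ι ∘ S) α = ρB ∘ π'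
  have hδα : conv (ιA.toLinearMap ∘ₗ S) αA.toLinearMap = ρB ∘ₗ π' := by
    rw [hαιρ, ← conv_assoc, hδι, cunit_conv]
  -- conv γ (ρB ∘ π') = α ∘ i' ∘ π'
  have hγρ : conv (ιA.toLinearMap ∘ₗ i' ∘ₗ π') (ρB ∘ₗ π') =
      αA.toLinearMap ∘ₗ i' ∘ₗ π' := by
    have lhs : conv (ιA.toLinearMap ∘ₗ i' ∘ₗ π') (ρB ∘ₗ π') =
        TensorProduct.map (i' ∘ₗ π') π' ∘ₗ Coalgebra.comul (R := k) (A := H) := by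
      unfold conv
      rw [show TensorProduct.map (ιA.toLinearMap ∘ₗ i' ∘ₗ π') (ρB ∘ₗ π') =
          (TensorProduct.map ιA.toLinearMap ρB) ∘ₗ TensorProduct.map (i' ∘ₗ π') π' by
        rw [← TensorProduct.map_comp]]
      rw [← LinearMap.comp_assoc, ← LinearMap.comp_assoc, hmulιρ]
      simp [LinearMap.comp_assoc]
    have hmapsplit : TensorProduct.map (i' ∘ₗ π') π' =
        TensorProduct.map i' LinearMap.id ∘ₗ TensorProduct.map π' π' := by
      rw [← TensorProduct.map_comp]; simp
    have step1 : Coalgebra.comul (R := k) (A := H) ∘ₗ (i' ∘ₗ π') =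
        TensorProduct.map i' i' ∘ₗ (Coalgebra.comul (R := k) (A := B) ∘ₗ π') := by
      rw [← LinearMap.comp_assoc, ← hiΔ, LinearMap.comp_assoc]
    have step2 : Coalgebra.comul (R := k) (A := B) ∘ₗ π' =
        TensorProduct.map π' π' ∘ₗ Coalgebra.comul (R := k) (A := H) := hπΔ.symm
    have rhs : αA.toLinearMap ∘ₗ i' ∘ₗ π' =
        TensorProduct.map (i' ∘ₗ π') π' ∘ₗ Coalgebra.comul (R := k) (A := H) := by
      rw [hα, LinearMap.comp_assoc, step1, step2, ← LinearMap.comp_assoc,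
        ← LinearMap.comp_assoc, ← TensorProduct.map_comp, ← TensorProduct.map_comp]
      simp [hπi']
    rw [lhs, rhs]
  -- the main chain
  have key : ιA.toLinearMap ∘ₗ adjMap π i = αA.toLinearMap ∘ₗ adjMap π i := by
    calc ιA.toLinearMap ∘ₗ adjMap π i
        = conv (ιA.toLinearMap ∘ₗ i' ∘ₗ π') (ιA.toLinearMap ∘ₗ S) := by
          rw [hF, algHom_comp_conv]
      _ = conv (conv (ιA.toLinearMap ∘ₗ i' ∘ₗ π') (ιA.toLinearMap ∘ₗ S))
            (conv αA.toLinearMap (αA.toLinearMap ∘ₗ S)) := by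
          rw [hαS, conv_cunit]
      _ = conv (conv (ιA.toLinearMap ∘ₗ i' ∘ₗ π')
            (conv (ιA.toLinearMap ∘ₗ S) αA.toLinearMap)) (αA.toLinearMap ∘ₗ S) := by
          rw [← conv_assoc, conv_assoc (ιA.toLinearMap ∘ₗ i' ∘ₗ π') (ιA.toLinearMap ∘ₗ S) αA.toLinearMap]
      _ = conv (conv (ιA.toLinearMap ∘ₗ i' ∘ₗ π') (ρB ∘ₗ π')) (αA.toLinearMap ∘ₗ S) := by
          rw [hδα]
      _ = conv (αA.toLinearMap ∘ₗ i' ∘ₗ π') (αA.toLinearMap ∘ₗ S) := by rw [hγρ]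
      _ = αA.toLinearMap ∘ₗ conv (i' ∘ₗ π') S := by
          rw [algHom_comp_conv]
      _ = αA.toLinearMap ∘ₗ adjMap π i := by rw [hF]
  intro h
  have := LinearMap.congr_fun key h
  simp only [LinearMap.comp_apply] at this
  rw [hα] at this
  simp only [LinearMap.comp_apply] at this
  rw [← this]
  rfl
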